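/- There do not exist real numbers β and B̂ such that β = 1, β·B̂ = 1/2 and β·B̂² = 1/3. Consequently, the reduced Stratonovich order conditions (2), (3) and (25) cannot all be satisfied by coefficients with a single stochastic stage s₂ = 1. -/
import Mathlib


open Matrix

theorem stmt19 :
    (¬ ∃ (β Bh : ℝ), β = 1 ∧ β * Bh = 1/2 ∧ β * Bh ^ 2 = 1/3) ∧
    (¬ ∃ (β : Fin 1 → ℝ) (Bh : Matrix (Fin 1) (Fin 1) ℝ),
      β ⬝ᵥ (1 : Fin 1 → ℝ) = 1 ∧
      β ⬝ᵥ (Bh *ᵥ 1) = 1/2 ∧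
      β ⬝ᵥ ((Bh *ᵥ 1) * (Bh *ᵥ 1)) = 1/3) := by
  constructor
  · rintro ⟨β, Bh, h1, h2, h3⟩
    subst h1
    rw [one_mul] at h2
    rw [one_mul, h2] at h3
    norm_num at h3
  · rintro ⟨β, Bh, h1, h2, h3⟩
    simp [dotProduct, mulVec, Fin.sum_univ_one, Pi.mul_apply] at h1 h2 h3
    rw [h1, one_mul] at h2 h3
    rw [show Bh 0 0 = 1/2 from by linarith [h2]] at h3
    norm_num at h3
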